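/- arXiv:2109.00196 — 3 statements merged into one kernel-verified Lean document; each statement's English description precedes it below -/
import Mathlib

section
/- Let F: C → D be a full, dense, objective additive functor between additive categories. Then F induces an equivalence C/[Ker F] ≅ D, where Ker F denotes the full subcategory of objects X with F(X) = 0 and [Ker F] is the ideal of morphisms factoring through an object of Ker F. -/
open CategoryTheory Limits Opposite

universe v u

namespace Paper

variable {C D : Type u} [Category.{v} C] [Category.{v} D] [Preadditive C] [Preadditive D]

/-- The ideal relation on `C` associated to the kernel objects of a functor `F`:
two morphisms are identified iff their difference factors through an object `K`
with `F(K) = 0`.  The quotient category `Quotient (kerRel F)` is `C/[Ker F]`. -/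
def kerRel (F : C ⥤ D) : HomRel C := fun {A A'} f g =>
  ∃ (K : C) (a : A ⟶ K) (b : K ⟶ A'), IsZero (F.obj K) ∧ a ≫ b = f - g

/-- A full, dense (essentially surjective), objective additive functor
`F : C ⥤ D` induces an equivalence `C/[Ker F] ≌ D` compatible with the quotient
functor. -/
theorem equivalence_of_full_dense_objective (F : C ⥤ D) [F.Additive] [F.Full] [F.EssSurj]
    (hobjective : ∀ {A A' : C} (f : A ⟶ A'), F.map f = 0 →
      ∃ (K : C) (a : A ⟶ K) (b : K ⟶ A'), IsZero (F.obj K) ∧ a ≫ b = f) :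
    ∃ e : CategoryTheory.Quotient (kerRel F) ≌ D,
      Nonempty (Quotient.functor (kerRel F) ⋙ e.functor ≅ F) := by
  have hcomp : ∀ (x y : C) (f g : x ⟶ y), kerRel F f g → F.map f = F.map g := by
    rintro A A' f g ⟨K, a, b, hK, hab⟩
    have h0 : F.map (f - g) = 0 := by
      rw [← hab, F.map_comp, hK.eq_of_src (F.map b) 0, Limits.comp_zero]
    rw [F.map_sub, sub_eq_zero] at h0
    exact h0
  let G := CategoryTheory.Quotient.lift (kerRel F) F hcomp
  have hGmap : ∀ {A A' : C} (f : A ⟶ A'),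
      G.map ((Quotient.functor (kerRel F)).map f) = F.map f := by
    intro A A' f
    exact Quotient.lift_map_functor_map (kerRel F) F hcomp f
  haveI : G.Full := by
    constructor
    rintro ⟨A⟩ ⟨A'⟩ u
    obtain ⟨f, hf⟩ := F.map_surjective u
    exact ⟨(Quotient.functor (kerRel F)).map f, by rw [hGmap]; exact hf⟩
  haveI : G.Faithful := by
    constructor
    rintro ⟨A⟩ ⟨A'⟩ x y h
    obtain ⟨f, rfl⟩ := (Quotient.functor (kerRel F)).map_surjective x
    obtain ⟨g, rfl⟩ := (Quotient.functor (kerRel F)).map_surjective y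
    rw [hGmap, hGmap] at h
    have h0 : F.map (f - g) = 0 := by rw [F.map_sub, h, sub_self]
    obtain ⟨K, a, b, hK, hab⟩ := hobjective (f - g) h0
    exact CategoryTheory.Quotient.sound (kerRel F) ⟨K, a, b, hK, hab⟩
  haveI : G.EssSurj := by
    constructor
    intro Y
    obtain ⟨X, ⟨e⟩⟩ := Functor.EssSurj.mem_essImage (F := F) Y
    exact ⟨(Quotient.functor (kerRel F)).obj X, ⟨e⟩⟩
  haveI : G.IsEquivalence := { }
  exact ⟨G.asEquivalence, ⟨Quotient.lift.isLift (kerRel F) F hcomp⟩⟩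

end Paper
end

section
/- Let (C, E, s) be a skeletally small extriangulated category with weak kernels. The full subcategory def E of mod C consisting of functors isomorphic to contravariant defects of conflations equals the full subcategory eff E of effaceable functors, and def E is a Serre subcategory of mod C. -/
open CategoryTheory Limits Opposite

universe v u



namespace Paper

variable (C : Type u) [Category.{v} C]

/-- A category has weak kernels if every morphism admits a weak kernel. -/
def HasWeakKernels [Preadditive C] : Prop :=
  ∀ ⦃X Y : C⦄ (f : X ⟶ Y), ∃ (K : C) (k : K ⟶ X), k ≫ f = 0 ∧
    ∀ ⦃Z : C⦄ (g : Z ⟶ X), g ≫ f = 0 → ∃ h : Z ⟶ K, h ≫ k = g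

variable {C}

/-- A (right) module over `C`, i.e. an object of `Mod C = (Cᵒᵖ ⥤ Ab)`, is finitely
presented if it admits a presentation `C(-,X) ⟶ C(-,Y) ⟶ F ⟶ 0`. -/
def IsFP [Preadditive C] (F : Cᵒᵖ ⥤ AddCommGrpCat.{v}) : Prop :=
  ∃ (X Y : C) (f : X ⟶ Y) (p : preadditiveYoneda.obj Y ⟶ F)
    (w : preadditiveYoneda.map f ≫ p = 0),
      Epi p ∧ (ShortComplex.mk _ _ w).Exact

/-- A covariant module over `C` is finitely presented if it admits a presentation
`C(Y,-) ⟶ C(X,-) ⟶ F ⟶ 0`. -/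
def IsFPCo [Preadditive C] (F : C ⥤ AddCommGrpCat.{v}) : Prop :=
  ∃ (X Y : C) (f : X ⟶ Y) (p : preadditiveCoyoneda.obj (op X) ⟶ F)
    (w : preadditiveCoyoneda.map f.op ≫ p = 0),
      Epi p ∧ (ShortComplex.mk _ _ w).Exact

/-- `S` is a Serre subcategory of the (full abelian sub)category `D` of the ambient
abelian category `A`: it is closed under subobjects, quotients and extensions taken
in `D`. -/
def IsSerreIn {A : Type*} [Category A] [Abelian A] (D S : Set A) : Prop :=
  S ⊆ D ∧
  (∀ ⦃X Y : A⦄ (f : X ⟶ Y), Mono f → X ∈ D → Y ∈ S → X ∈ S) ∧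
  (∀ ⦃X Y : A⦄ (f : X ⟶ Y), Epi f → Y ∈ D → X ∈ S → Y ∈ S) ∧
  (∀ (s : ShortComplex A), s.ShortExact → s.X₂ ∈ D → s.X₁ ∈ S → s.X₃ ∈ S → s.X₂ ∈ S)

end Paper



namespace Paper

variable (C : Type u) [Category.{v} C] [Preadditive C]

/-- An extriangulated (= 1-exangulated) category structure on `C`: a biadditive
`Ab`-valued bifunctor `E` together with a realization predicate `Conf x y δ`
("`A ⟶x B ⟶y Z` is a conflation realizing `δ ∈ E(Z,A)`"), satisfying:
every extension is realized, realized sequences are complexes which give the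
exact sequences of functors required by the axioms of Nakaoka–Palu, and
inflations/deflations are closed under composition (EA1). -/
structure ExtCat where
  E : Cᵒᵖ ⥤ C ⥤ AddCommGrpCat.{v}
  Conf : ∀ {A B Z : C}, (A ⟶ B) → (B ⟶ Z) → ((E.obj (op Z)).obj A) → Prop
  real : ∀ {A Z : C} (δ : (E.obj (op Z)).obj A), ∃ (B : C) (x : A ⟶ B) (y : B ⟶ Z), Conf x y δ
  conf_comp_zero : ∀ {A B Z : C} {x : A ⟶ B} {y : B ⟶ Z} {δ}, Conf x y δ → x ≫ y = 0
  ex_right : ∀ {A B Z : C} {x : A ⟶ B} {y : B ⟶ Z} {δ}, Conf x y δ →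
    ∀ {T : C} (g : T ⟶ Z), (∃ h : T ⟶ B, h ≫ y = g) ↔ (E.map g.op).app A δ = 0
  ex_mid_right : ∀ {A B Z : C} {x : A ⟶ B} {y : B ⟶ Z} {δ}, Conf x y δ →
    ∀ {T : C} (h : T ⟶ B), h ≫ y = 0 → ∃ e : T ⟶ A, e ≫ x = h
  ex_left : ∀ {A B Z : C} {x : A ⟶ B} {y : B ⟶ Z} {δ}, Conf x y δ →
    ∀ {T : C} (g : A ⟶ T), (∃ h : B ⟶ T, x ≫ h = g) ↔ ((E.obj (op Z)).map g) δ = 0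
  ex_mid_left : ∀ {A B Z : C} {x : A ⟶ B} {y : B ⟶ Z} {δ}, Conf x y δ →
    ∀ {T : C} (h : B ⟶ T), x ≫ h = 0 → ∃ e : Z ⟶ T, y ≫ e = h
  defl_comp : ∀ {X Y Z : C} (f : X ⟶ Y) (g : Y ⟶ Z),
    (∃ (A : C) (x : A ⟶ X)(δ : _), Conf x f δ) → (∃ (A : C) (x : A ⟶ Y)(δ : _), Conf x g δ) →
    ∃ (A : C) (x : A ⟶ X)(δ : _), Conf x (f ≫ g) δ
  infl_comp : ∀ {X Y Z : C} (f : X ⟶ Y) (g : Y ⟶ Z),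
    (∃ (W : C) (y : Y ⟶ W)(δ : _), Conf f y δ) → (∃ (W : C) (y : Z ⟶ W)(δ : _), Conf g y δ) →
    ∃ (W : C) (y : Z ⟶ W)(δ : _), Conf (f ≫ g) y δ

namespace ExtCat

variable {C}
variable (ET : ExtCat C)

/-- `y` is an `s`-deflation. -/
def IsDeflation {B Z : C} (y : B ⟶ Z) : Prop :=
  ∃ (A : C) (x : A ⟶ B)(δ : _), ET.Conf x y δ

/-- `x` is an `s`-inflation. -/
def IsInflation {A B : C} (x : A ⟶ B) : Prop :=
  ∃ (Z : C) (y : B ⟶ Z)(δ : _), ET.Conf x y δ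

/-- `P` is projective: morphisms from `P` lift along deflations. -/
def IsProj (P : C) : Prop :=
  ∀ {A B Z : C} (x : A ⟶ B) (y : B ⟶ Z)(δ : _), ET.Conf x y δ →
    ∀ c : P ⟶ Z, ∃ b : P ⟶ B, b ≫ y = c

/-- `I` is injective: morphisms to `I` extend along inflations. -/
def IsInj (I : C) : Prop :=
  ∀ {A B Z : C} (x : A ⟶ B) (y : B ⟶ Z)(δ : _), ET.Conf x y δ →
    ∀ a : A ⟶ I, ∃ b : B ⟶ I, x ≫ b = a

/-- `C` has enough projectives. -/
def EnoughProj : Prop :=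
  ∀ Z : C, ∃ (A P : C) (x : A ⟶ P) (y : P ⟶ Z)(δ : _), ET.IsProj P ∧ ET.Conf x y δ

/-- `C` has enough injectives. -/
def EnoughInj : Prop :=
  ∀ A : C, ∃ (I S : C) (x : A ⟶ I) (y : I ⟶ S)(δ : _), ET.IsInj I ∧ ET.Conf x y δ

end ExtCat

/-- The contravariant defect of a conflation with deflation `y`:
`Coker(C(-,B) ⟶ C(-,Z))` in `Mod C`. -/
noncomputable def defect {B Z : C} (y : B ⟶ Z) : Cᵒᵖ ⥤ AddCommGrpCat.{v} :=
  cokernel (preadditiveYoneda.map y)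

/-- The covariant defect of a conflation with inflation `x`:
`Coker(C(B,-) ⟶ C(A,-))`. -/
noncomputable def codefect {A B : C} (x : A ⟶ B) : C ⥤ AddCommGrpCat.{v} :=
  cokernel (preadditiveCoyoneda.map x.op)

namespace ExtCat

variable {C} (ET : ExtCat C)

/-- The subcategory `def E ⊆ Mod C` of functors isomorphic to a contravariant defect. -/
noncomputable def defSet : Set (Cᵒᵖ ⥤ AddCommGrpCat.{v}) :=
  {G | ∃ (B Z : C) (y : B ⟶ Z), ET.IsDeflation y ∧ Nonempty (G ≅ defect C y)}

/-- An additive subbifunctor of `E`. -/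
structure Subfunctor where
  carrier : ∀ (Z : Cᵒᵖ) (A : C), AddSubgroup ((ET.E.obj Z).obj A)
  map₁ : ∀ {Z Z' : Cᵒᵖ} (g : Z ⟶ Z') (A : C) (δ : (ET.E.obj Z).obj A),
    δ ∈ carrier Z A → (ET.E.map g).app A δ ∈ carrier Z' A
  map₂ : ∀ (Z : Cᵒᵖ) {A A' : C} (a : A ⟶ A') (δ : (ET.E.obj Z).obj A),
    δ ∈ carrier Z A → ((ET.E.obj Z).map a) δ ∈ carrier Z A'

variable {ET}

/-- `y` is a deflation of the substructure determined by a subbifunctor `F ⊆ E`. -/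
def Subfunctor.IsDefl (F : ET.Subfunctor) {B Z : C} (y : B ⟶ Z) : Prop :=
  ∃ (A : C) (x : A ⟶ B) (δ : (ET.E.obj (op Z)).obj A), ET.Conf x y δ ∧ δ ∈ F.carrier (op Z) A

/-- A subbifunctor `F ⊆ E` is closed iff its deflations are stable under composition,
equivalently `(C, F, s|_F)` is extriangulated. -/
def Subfunctor.IsClosed (F : ET.Subfunctor) : Prop :=
  ∀ {X Y Z : C} (f : X ⟶ Y) (g : Y ⟶ Z), F.IsDefl f → F.IsDefl g → F.IsDefl (f ≫ g)

/-- The defects of the substructure determined by a subbifunctor. -/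
noncomputable def Subfunctor.defSet (F : ET.Subfunctor) : Set (Cᵒᵖ ⥤ AddCommGrpCat.{v}) :=
  {G | ∃ (B Z : C) (y : B ⟶ Z), F.IsDefl y ∧ Nonempty (G ≅ defect C y)}

/-- An effaceable functor. -/
def Effaceable (ET : ExtCat C) (F : Cᵒᵖ ⥤ AddCommGrpCat.{v}) : Prop :=
  ∀ (X : C) (x : F.obj (op X)), ∃ (Y : C) (α : Y ⟶ X), ET.IsDeflation α ∧ F.map α.op x = 0

end ExtCat

end Paper

namespace Paper

open ExtCat

variable {C : Type u} [Category.{v} C] [Preadditive C]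

/- ### Auxiliary lemmas -/

lemma Emap_comp_app (ET : ExtCat C) {A T T' Z : C} (a : T' ⟶ T) (t : T ⟶ Z)
    (δ : (ET.E.obj (op Z)).obj A) :
    (ET.E.map (a ≫ t).op).app A δ = (ET.E.map a.op).app A ((ET.E.map t.op).app A δ) := by
  rw [op_comp, Functor.map_comp, NatTrans.comp_app, comp_apply]

/-- If `t` factors through the deflation of a conflation realizing `δ`, then `E(t)(δ) = 0`. -/
lemma Evanish (ET : ExtCat C) {A B Z : C} {x : A ⟶ B} {y : B ⟶ Z} {δ}
    (hC : ET.Conf x y δ) {T : C} (t : T ⟶ Z) (h : T ⟶ B) (hh : h ≫ y = t) :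
    (ET.E.map t.op).app A δ = 0 :=
  (ET.ex_right hC t).1 ⟨h, hh⟩

/-- Defects are finitely presented. -/
lemma isFP_defect {B Z : C} (y : B ⟶ Z) : IsFP (defect C y) := by
  refine ⟨B, Z, y, cokernel.π _, cokernel.condition _,
    inferInstanceAs (Epi (cokernel.π (preadditiveYoneda.map y))), ?_⟩
  exact ShortComplex.exact_of_g_is_cokernel _ (cokernelIsCokernel _)

lemma isFP_of_iso {F G : Cᵒᵖ ⥤ AddCommGrpCat.{v}} (e : F ≅ G) (h : IsFP F) : IsFP G := by
  obtain ⟨X, Y, f, p, w, hEpi, hExact⟩ := h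
  refine ⟨X, Y, f, p ≫ e.hom, by rw [← Category.assoc, w, zero_comp], ?_, ?_⟩
  · exact @epi_comp _ _ _ _ _ p hEpi e.hom inferInstance
  · refine ShortComplex.exact_of_iso ?_ hExact
    exact ShortComplex.isoMk (Iso.refl _) (Iso.refl _) e (by simp) (by simp)

lemma effaceable_of_iso (ET : ExtCat C) {F G : Cᵒᵖ ⥤ AddCommGrpCat.{v}} (e : F ≅ G)
    (h : Effaceable ET F) : Effaceable ET G := by
  intro X ξ
  obtain ⟨Y, α, hα, hz⟩ := h X (e.inv.app (op X) ξ)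
  refine ⟨Y, α, hα, ?_⟩
  have h1 : F.map α.op (e.inv.app (op X) ξ) = e.inv.app (op Y) (G.map α.op ξ) := by
    have := ConcreteCategory.congr_hom (e.inv.naturality α.op) ξ
    simp only [comp_apply] at this
    exact this.symm
  have h2 : e.inv.app (op Y) (G.map α.op ξ) = 0 := by rw [← h1, hz]
  have h3 := ConcreteCategory.congr_hom (e.inv_hom_id_app (op Y)) (G.map α.op ξ)
  simp only [comp_apply, id_apply] at h3
  calc G.map α.op ξ = e.hom.app (op Y) (e.inv.app (op Y) (G.map α.op ξ)) := h3.symm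
    _ = 0 := by rw [h2]; simp

/-- Defects are effaceable. -/
lemma effaceable_defect (ET : ExtCat C) {B Z : C} (y : B ⟶ Z) (hy : ET.IsDeflation y) :
    Effaceable ET (defect C y) := by
  obtain ⟨A, x, δ, hC⟩ := hy
  intro X ξ
  -- lift ξ to a morphism t : X ⟶ Z
  have hsurj : Function.Surjective ((cokernel.π (preadditiveYoneda.map y)).app (op X)) :=
    (AddCommGrpCat.epi_iff_surjective _).1 inferInstance
  obtain ⟨t, ht⟩ := hsurj ξ
  set t' : X ⟶ Z := t with ht'
  obtain ⟨B', x', α, hC'⟩ := ET.real ((ET.E.map t'.op).app A δ)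
  refine ⟨B', α, ⟨A, x', _, hC'⟩, ?_⟩
  have hE : (ET.E.map (α ≫ t').op).app A δ = 0 := by
    rw [Emap_comp_app]
    exact Evanish ET hC' α (𝟙 B') (Category.id_comp α)
  obtain ⟨h, hh⟩ : ∃ h : B' ⟶ B, h ≫ y = α ≫ t' := (ET.ex_right hC (α ≫ t')).2 hE
  -- compute
  have hnat := ConcreteCategory.congr_hom
    ((cokernel.π (preadditiveYoneda.map y)).naturality α.op) t
  simp only [comp_apply] at hnat
  have hyon : (preadditiveYoneda.obj Z).map α.op t = α ≫ t' := rfl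
  calc (defect C y).map α.op ξ
      = (defect C y).map α.op ((cokernel.π (preadditiveYoneda.map y)).app (op X) t) := by rw [ht]
    _ = @id ((defect C y).obj (op B')) ((cokernel.π (preadditiveYoneda.map y)).app (op B')
          ((preadditiveYoneda.obj Z).map α.op t)) := hnat.symm
    _ = @id ((defect C y).obj (op B')) ((cokernel.π (preadditiveYoneda.map y)).app (op B')
          ((preadditiveYoneda.map y).app (op B') h)) := by rw [hyon, ← hh]; rfl
    _ = 0 := by
          have h1 : (preadditiveYoneda.map y).app (op B') ≫
              (cokernel.π (preadditiveYoneda.map y)).app (op B') = 0 := by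
            rw [← NatTrans.comp_app, cokernel.condition]
            simp
          have h2 := ConcreteCategory.congr_hom h1 h
          exact h2

/-- The hard direction: finitely presented effaceable functors are defects. -/
lemma mem_defSet_of_fp_effaceable (ET : ExtCat C) {F : Cᵒᵖ ⥤ AddCommGrpCat.{v}}
    (hFP : IsFP F) (hEff : Effaceable ET F) : F ∈ ET.defSet := by
  obtain ⟨X, Y, f, p, w, hEpi, hExact⟩ := hFP
  haveI := hEpi
  -- Step 1: efface the canonical generator, giving a deflation g with p(g) = 0
  obtain ⟨B, g, hgDefl, hg0⟩ := hEff Y (p.app (op Y) (𝟙 Y))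
  have hpg : p.app (op B) g = 0 := by
    have hnat := ConcreteCategory.congr_hom (p.naturality g.op) (𝟙 Y)
    have h1 : (preadditiveYoneda.obj Y).map g.op (𝟙 Y) = g := by
      show g ≫ 𝟙 Y = g; simp
    rw [← h1]
    exact hnat.trans hg0
  -- Step 2: g factors through f
  obtain ⟨h, hhf⟩ : ∃ h : B ⟶ X, h ≫ f = g := by
    have hex := hExact.map ((evaluation Cᵒᵖ AddCommGrpCat.{v}).obj (op B))
    rw [ShortComplex.ab_exact_iff] at hex
    exact hex g hpg
  obtain ⟨A, x, δ, hC⟩ := hgDefl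
  -- Step 3: produce a biproduct-like object G₀ by realizing 0 ∈ E(Y, X)
  obtain ⟨G₀, x₀, d₀, hC₀⟩ := ET.real (0 : (ET.E.obj (op Y)).obj X)
  have hx₀d₀ : x₀ ≫ d₀ = 0 := ET.conf_comp_zero hC₀
  obtain ⟨s, hs⟩ : ∃ s : Y ⟶ G₀, s ≫ d₀ = 𝟙 Y := by
    refine (ET.ex_right hC₀ (𝟙 Y)).2 ?_
    simp
  obtain ⟨r, hr⟩ : ∃ r : G₀ ⟶ X, x₀ ≫ r = 𝟙 X := by
    refine (ET.ex_left hC₀ (𝟙 X)).2 ?_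
    simp
  obtain ⟨e₁, he₁⟩ : ∃ e₁ : Y ⟶ G₀, d₀ ≫ e₁ = 𝟙 G₀ - (r ≫ x₀ + d₀ ≫ s) := by
    refine ET.ex_mid_left hC₀ _ ?_
    simp only [Preadditive.comp_sub, Preadditive.comp_add, Category.comp_id,
      ← Category.assoc, hr, hx₀d₀, zero_comp, Category.id_comp, add_zero, sub_self]
  obtain ⟨c, hc⟩ : ∃ c : Y ⟶ X, c ≫ x₀ = e₁ := by
    refine ET.ex_mid_right hC₀ e₁ ?_
    have h2 : (𝟙 G₀ - (r ≫ x₀ + d₀ ≫ s)) ≫ d₀ = 0 := by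
      simp only [Preadditive.sub_comp, Preadditive.add_comp, Category.id_comp, Category.assoc]
      rw [hx₀d₀, hs]
      simp
    have h3 : d₀ ≫ (e₁ ≫ d₀) = 0 := by rw [← Category.assoc, he₁, h2]
    have h4 := congrArg (fun q => s ≫ q) h3
    simpa [← Category.assoc, hs] using h4
  set πX : G₀ ⟶ X := r + d₀ ≫ c with hπX
  have hb1 : x₀ ≫ πX = 𝟙 X := by
    rw [hπX, Preadditive.comp_add, hr, ← Category.assoc, hx₀d₀, zero_comp, add_zero]
  have hb2 : πX ≫ x₀ + d₀ ≫ s = 𝟙 G₀ := by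
    rw [hπX, Preadditive.add_comp, Category.assoc, hc, he₁]
    abel
  have hb3 : s ≫ πX = 0 := by
    have h6 := congrArg (fun q => s ≫ q) hb2
    simp only [Preadditive.comp_add, Category.comp_id] at h6
    rw [← Category.assoc s d₀ s, hs, Category.id_comp, add_eq_right] at h6
    -- h6 : s ≫ πX ≫ x₀ = 0
    calc s ≫ πX = (s ≫ πX) ≫ (x₀ ≫ πX) := by rw [hb1, Category.comp_id]
      _ = (s ≫ πX ≫ x₀) ≫ πX := by simp only [Category.assoc]
      _ = 0 := by rw [h6, zero_comp]
  -- Step 4: realize γ = E(ζ)(δ) where ζ = πX ≫ f - d₀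
  set ζ : G₀ ⟶ Y := πX ≫ f - d₀ with hζ
  obtain ⟨U, x₉, Ψ, hC₉⟩ := ET.real ((ET.E.map ζ.op).app A δ)
  have hdefl : ET.IsDeflation (Ψ ≫ d₀) :=
    ET.defl_comp Ψ d₀ ⟨A, x₉, _, hC₉⟩ ⟨X, x₀, 0, hC₀⟩
  -- (A) : Ψ ≫ d₀ factors through f
  have hEΨζ : (ET.E.map (Ψ ≫ ζ).op).app A δ = 0 := by
    rw [Emap_comp_app]
    exact Evanish ET hC₉ Ψ (𝟙 U) (Category.id_comp Ψ)
  obtain ⟨rr, hrr⟩ : ∃ rr : U ⟶ B, rr ≫ g = Ψ ≫ ζ := (ET.ex_right hC (Ψ ≫ ζ)).2 hEΨζ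
  have hA : Ψ ≫ d₀ = (Ψ ≫ πX - rr ≫ h) ≫ f := by
    have : Ψ ≫ d₀ = Ψ ≫ (πX ≫ f) - Ψ ≫ ζ := by
      rw [hζ]; simp [Preadditive.comp_sub]
    rw [this, ← hrr, ← hhf]
    simp [Preadditive.sub_comp, Category.assoc]
  -- (B) : f factors through Ψ ≫ d₀
  have hwζ : (x₀ + f ≫ s) ≫ ζ = 0 := by
    rw [hζ]
    simp only [Preadditive.comp_sub, Preadditive.add_comp, Category.assoc]
    rw [← Category.assoc x₀ πX f, hb1, Category.id_comp, hx₀d₀,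
      ← Category.assoc s πX f, hb3, zero_comp, comp_zero, hs]
    simp
  have hE0 : (ET.E.map (0 : X ⟶ Y).op).app A δ = 0 :=
    Evanish ET hC (0 : X ⟶ Y) 0 zero_comp
  have hEw : (ET.E.map (x₀ + f ≫ s).op).app A ((ET.E.map ζ.op).app A δ) = 0 := by
    rw [← Emap_comp_app, hwζ, hE0]
  obtain ⟨e₂, he₂⟩ : ∃ e₂ : X ⟶ U, e₂ ≫ Ψ = x₀ + f ≫ s :=
    (ET.ex_right hC₉ (x₀ + f ≫ s)).2 hEw
  have hB : e₂ ≫ (Ψ ≫ d₀) = f := by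
    rw [← Category.assoc, he₂]
    simp only [Preadditive.add_comp, Category.assoc, hx₀d₀, hs]
    simp
  -- Step 5: construct the isomorphism F ≅ defect (Ψ ≫ d₀)
  refine ⟨U, Y, Ψ ≫ d₀, hdefl, ?_⟩
  set m := preadditiveYoneda.map (Ψ ≫ d₀) with hm
  have cond1 : m ≫ p = 0 := by
    rw [hm, hA, Functor.map_comp, Category.assoc, w, comp_zero]
  have cond2 : preadditiveYoneda.map f ≫ cokernel.π m = 0 := by
    conv_lhs => rw [← hB]
    rw [Functor.map_comp, Category.assoc, hm, cokernel.condition, comp_zero]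
  have K₁ := hExact.gIsCokernel
  let φ : cokernel m ⟶ F := cokernel.desc m p cond1
  let ψ : F ⟶ cokernel m := K₁.desc (CokernelCofork.ofπ (cokernel.π m) cond2)
  have hψ : p ≫ ψ = cokernel.π m := Cofork.IsColimit.π_desc K₁
  have hφ : cokernel.π m ≫ φ = p := cokernel.π_desc m p cond1
  refine ⟨⟨ψ, φ, ?_, ?_⟩⟩
  · show ψ ≫ φ = 𝟙 F
    rw [← cancel_epi p, ← Category.assoc, hψ, hφ]
    exact (Category.comp_id p).symm
  · show φ ≫ ψ = 𝟙 (cokernel m)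
    rw [← cancel_epi (cokernel.π m), ← Category.assoc, hφ, hψ]
    exact (Category.comp_id (cokernel.π m)).symm

/-- For a skeletally small extriangulated category `C` with weak
kernels, the subcategory `def E ⊆ mod C` of functors isomorphic to contravariant
defects coincides with the subcategory `eff E` of effaceable finitely presented
functors, and it is a Serre subcategory of `mod C`. -/
theorem defSet_eq_effaceable_and_serre [EssentiallySmall.{v} C]
    (hwk : HasWeakKernels C) (ET : ExtCat C) :
    ET.defSet = {F | IsFP F ∧ Effaceable ET F} ∧
      IsSerreIn {F : Cᵒᵖ ⥤ AddCommGrpCat.{v} | IsFP F} ET.defSet := by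
  have hset : ET.defSet = {F | IsFP F ∧ Effaceable ET F} := by
    ext G
    constructor
    · rintro ⟨B, Z, y, hy, ⟨e⟩⟩
      exact ⟨isFP_of_iso e.symm (isFP_defect y),
        effaceable_of_iso ET e.symm (effaceable_defect ET y hy)⟩
    · rintro ⟨h1, h2⟩
      exact mem_defSet_of_fp_effaceable ET h1 h2
  refine ⟨hset, ?_, ?_, ?_, ?_⟩
  · rw [hset]; intro F hF; exact hF.1
  · -- subobjects
    intro F G q hq hFP hG
    rw [hset] at hG ⊢
    refine ⟨hFP, ?_⟩
    intro Z ξ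
    obtain ⟨W, α, hα, hz⟩ := hG.2 Z (q.app (op Z) ξ)
    refine ⟨W, α, hα, ?_⟩
    haveI := hq
    have hmono : Function.Injective (q.app (op W)) :=
      (AddCommGrpCat.mono_iff_injective _).1 inferInstance
    apply hmono
    have hnat := ConcreteCategory.congr_hom (q.naturality α.op) ξ
    simp only [comp_apply] at hnat
    rw [hnat, hz]
    exact ((q.app (op W)).hom.map_zero).symm
  · -- quotients
    intro F G q hq hFP hF
    rw [hset] at hF ⊢
    refine ⟨hFP, ?_⟩
    intro Z ξ
    haveI := hq
    have hsurj : Function.Surjective (q.app (op Z)) :=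
      (AddCommGrpCat.epi_iff_surjective _).1 inferInstance
    obtain ⟨ξ', hξ'⟩ := hsurj ξ
    obtain ⟨W, α, hα, hz⟩ := hF.2 Z ξ'
    refine ⟨W, α, hα, ?_⟩
    have hnat := ConcreteCategory.congr_hom (q.naturality α.op) ξ'
    simp only [comp_apply] at hnat
    rw [← hξ', ← hnat, hz]
    exact (q.app (op W)).hom.map_zero
  · -- extensions
    intro s hse h2 h1 h3
    rw [hset] at h1 h3 ⊢
    refine ⟨h2, ?_⟩
    intro Z v
    obtain ⟨W, α₁, hα₁, hz₃⟩ := h3.2 Z (s.g.app (op Z) v)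
    have hnatg := ConcreteCategory.congr_hom (s.g.naturality α₁.op) v
    simp only [comp_apply] at hnatg
    have hgv : s.g.app (op W) (s.X₂.map α₁.op v) = 0 := by
      rw [hnatg]
      exact hz₃
    obtain ⟨uu, huu⟩ : ∃ uu, s.f.app (op W) uu = s.X₂.map α₁.op v := by
      have hex := hse.exact.map ((evaluation Cᵒᵖ AddCommGrpCat.{v}).obj (op W))
      rw [ShortComplex.ab_exact_iff] at hex
      exact hex _ hgv
    obtain ⟨V, α₂, hα₂, hz₁⟩ := h1.2 W uu
    refine ⟨V, α₂ ≫ α₁, ET.defl_comp α₂ α₁ hα₂ hα₁, ?_⟩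
    have hnatf := ConcreteCategory.congr_hom (s.f.naturality α₂.op) uu
    simp only [comp_apply] at hnatf
    calc s.X₂.map (α₂ ≫ α₁).op v = s.X₂.map α₂.op (s.X₂.map α₁.op v) := by
          rw [op_comp, Functor.map_comp]; rfl
      _ = s.X₂.map α₂.op (s.f.app (op W) uu) := by rw [huu]
      _ = s.f.app (op V) (s.X₁.map α₂.op uu) := hnatf.symm
      _ = 0 := by rw [hz₁]; exact (s.f.app (op V)).hom.map_zero

end Paper
end

section
/- Let (C, E, s) be an extriangulated category with enough projectives. There is an equivalence of categories s-def C / [s-epi C] ≅ mod C̲, where the functor sends a deflation y: B → C to the defect Coker(C̲(-,y̲): C̲(-,B) → C̲(-,C)). -/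
open CategoryTheory Limits Opposite

universe v u



namespace Paper

open ZeroObject

namespace ExtCat

variable {C : Type u} [Category.{v} C] [Preadditive C] (ET : ExtCat C)

theorem isProj_zero [HasZeroObject C] : ET.IsProj (0 : C) := by
  intro A B Z x y δ h c
  exact ⟨0, ((isZero_zero C).eq_of_src _ _)⟩

theorem isProj_biprod [HasBinaryBiproducts C] {P Q : C} (hP : ET.IsProj P) (hQ : ET.IsProj Q) :
    ET.IsProj (P ⊞ Q) := by
  intro A B Z x y δ h c
  obtain ⟨b₁, hb₁⟩ := hP x y δ h (biprod.inl ≫ c)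
  obtain ⟨b₂, hb₂⟩ := hQ x y δ h (biprod.inr ≫ c)
  refine ⟨biprod.desc b₁ b₂, ?_⟩
  apply biprod.hom_ext' <;> simp [hb₁, hb₂]

theorem isInj_zero [HasZeroObject C] : ET.IsInj (0 : C) := by
  intro A B Z x y δ h a
  exact ⟨0, ((isZero_zero C).eq_of_tgt _ _)⟩

theorem isInj_biprod [HasBinaryBiproducts C] {P Q : C} (hP : ET.IsInj P) (hQ : ET.IsInj Q) :
    ET.IsInj (P ⊞ Q) := by
  intro A B Z x y δ h a
  obtain ⟨b₁, hb₁⟩ := hP x y δ h (a ≫ biprod.fst)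
  obtain ⟨b₂, hb₂⟩ := hQ x y δ h (a ≫ biprod.snd)
  refine ⟨biprod.lift b₁ b₂, ?_⟩
  apply biprod.hom_ext <;> simp [hb₁, hb₂]

/-- The ideal of morphisms factoring through a projective object. -/
def projRel : HomRel C := fun {X Y} f g =>
  ∃ (P : C) (a : X ⟶ P) (b : P ⟶ Y), ET.IsProj P ∧ a ≫ b = f - g

/-- The ideal of morphisms factoring through an injective object. -/
def injRel : HomRel C := fun {X Y} f g =>
  ∃ (I : C) (a : X ⟶ I) (b : I ⟶ Y), ET.IsInj I ∧ a ≫ b = f - g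

variable [HasZeroObject C] [HasBinaryBiproducts C]

instance : Congruence (projRel ET) where
  equivalence := by
    refine fun {X Y} => ⟨?_, ?_, ?_⟩
    · intro f
      exact ⟨0, 0, 0, ET.isProj_zero, by simp⟩
    · rintro f g ⟨P, a, b, hP, hab⟩
      exact ⟨P, -a, b, hP, by rw [Preadditive.neg_comp, hab]; abel⟩
    · rintro f g h ⟨P, a, b, hP, hab⟩ ⟨Q, a', b', hQ, hab'⟩
      refine ⟨P ⊞ Q, biprod.lift a a', biprod.desc b b', ET.isProj_biprod hP hQ, ?_⟩
      rw [biprod.lift_desc, hab, hab']; abel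
  comp_left := by
    rintro X Y Z f g g' ⟨P, a, b, hP, hab⟩
    exact ⟨P, f ≫ a, b, hP, by rw [Category.assoc, hab, Preadditive.comp_sub]⟩
  comp_right := by
    rintro X Y Z f f' g ⟨P, a, b, hP, hab⟩
    exact ⟨P, a, b ≫ g, hP, by rw [← Category.assoc, hab, Preadditive.sub_comp]⟩

instance : Congruence (injRel ET) where
  equivalence := by
    refine fun {X Y} => ⟨?_, ?_, ?_⟩
    · intro f
      exact ⟨0, 0, 0, ET.isInj_zero, by simp⟩
    · rintro f g ⟨P, a, b, hP, hab⟩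
      exact ⟨P, -a, b, hP, by rw [Preadditive.neg_comp, hab]; abel⟩
    · rintro f g h ⟨P, a, b, hP, hab⟩ ⟨Q, a', b', hQ, hab'⟩
      refine ⟨P ⊞ Q, biprod.lift a a', biprod.desc b b', ET.isInj_biprod hP hQ, ?_⟩
      rw [biprod.lift_desc, hab, hab']; abel
  comp_left := by
    rintro X Y Z f g g' ⟨P, a, b, hP, hab⟩
    exact ⟨P, f ≫ a, b, hP, by rw [Category.assoc, hab, Preadditive.comp_sub]⟩
  comp_right := by
    rintro X Y Z f f' g ⟨P, a, b, hP, hab⟩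
    exact ⟨P, a, b ≫ g, hP, by rw [← Category.assoc, hab, Preadditive.sub_comp]⟩

theorem projRel_add : ∀ ⦃X Y : C⦄ (f₁ f₂ g₁ g₂ : X ⟶ Y)
    (_ : projRel ET f₁ f₂) (_ : projRel ET g₁ g₂), projRel ET (f₁ + g₁) (f₂ + g₂) := by
  rintro X Y f₁ f₂ g₁ g₂ ⟨P, a, b, hP, hab⟩ ⟨Q, a', b', hQ, hab'⟩
  refine ⟨P ⊞ Q, biprod.lift a a', biprod.desc b b', ET.isProj_biprod hP hQ, ?_⟩
  rw [biprod.lift_desc, hab, hab']; abel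

theorem injRel_add : ∀ ⦃X Y : C⦄ (f₁ f₂ g₁ g₂ : X ⟶ Y)
    (_ : injRel ET f₁ f₂) (_ : injRel ET g₁ g₂), injRel ET (f₁ + g₁) (f₂ + g₂) := by
  rintro X Y f₁ f₂ g₁ g₂ ⟨P, a, b, hP, hab⟩ ⟨Q, a', b', hQ, hab'⟩
  refine ⟨P ⊞ Q, biprod.lift a a', biprod.desc b b', ET.isInj_biprod hP hQ, ?_⟩
  rw [biprod.lift_desc, hab, hab']; abel

/-- The projectively stable category `C̲ = C/[P]`. -/
abbrev Stab := Quotient (projRel ET)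

/-- The injectively stable category `C̄ = C/[I]`. -/
abbrev CoStab := Quotient (injRel ET)

noncomputable instance : Preadditive (Stab ET) :=
  Quotient.preadditive (projRel ET) (projRel_add ET)

noncomputable instance : Preadditive (CoStab ET) :=
  Quotient.preadditive (injRel ET) (injRel_add ET)

/-- The quotient functor `C ⥤ C̲`. -/
def toStab : C ⥤ Stab ET := Quotient.functor (projRel ET)

/-- The quotient functor `C ⥤ C̄`. -/
def toCoStab : C ⥤ CoStab ET := Quotient.functor (injRel ET)

/-- The contravariant defect as a finitely presented module over `C̲`:
`Coker(C̲(-,B) ⟶ C̲(-,Z))`. -/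
noncomputable def sdefect {B Z : C} (y : B ⟶ Z) : (Stab ET)ᵒᵖ ⥤ AddCommGrpCat.{v} :=
  cokernel (preadditiveYoneda.map ((ET.toStab).map y))

/-- The covariant defect as a finitely presented module over `C̄ᵒᵖ`:
`Coker(C̄(B,-) ⟶ C̄(A,-))`. -/
noncomputable def scodefect {A B : C} (x : A ⟶ B) : CoStab ET ⥤ AddCommGrpCat.{v} :=
  cokernel (preadditiveCoyoneda.map ((ET.toCoStab).map x).op)

end ExtCat

end Paper

namespace Paper

open ExtCat

variable {C : Type u} [Category.{v} C] [Preadditive C]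

/-- The category `s-def C` of `s`-deflations: the full subcategory of the morphism
category of `C` consisting of deflations. -/
def Defl (ET : ExtCat C) : Type max u v := {D : Σ (B Z : C), B ⟶ Z // ET.IsDeflation D.2.2}

instance (ET : ExtCat C) : Category (Defl ET) where
  Hom D D' := {p : (D.1.1 ⟶ D'.1.1) × (D.1.2.1 ⟶ D'.1.2.1) //
    D.1.2.2 ≫ p.2 = p.1 ≫ D'.1.2.2}
  id D := ⟨(𝟙 _, 𝟙 _), by simp⟩
  comp {D D' D''} f g := ⟨(f.1.1 ≫ g.1.1, f.1.2 ≫ g.1.2), by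
    rw [← Category.assoc, f.2, Category.assoc, g.2, ← Category.assoc]⟩
  id_comp f := by apply Subtype.ext; simp
  comp_id f := by apply Subtype.ext; simp
  assoc f g h := by apply Subtype.ext; simp

/-- The ideal of morphisms of `s-def C` factoring through a split epimorphism. -/
def deflRel (ET : ExtCat C) : HomRel (Defl ET) := fun {D D'} f g =>
  ∃ (D₀ : Defl ET) (u : D ⟶ D₀) (v : D₀ ⟶ D'), IsSplitEpi D₀.1.2.2 ∧
    (u ≫ v).1.1 = f.1.1 - g.1.1 ∧ (u ≫ v).1.2 = f.1.2 - g.1.2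

variable [HasZeroObject C] [HasBinaryBiproducts C]



section Development

open ZeroObject

namespace ExtCat

variable (ET : ExtCat C)

/-- Pullback of an `E`-extension along a morphism (contravariant variable). -/
abbrev pull {T Z A : C} (g : T ⟶ Z) (δ : (ET.E.obj (op Z)).obj A) :
    (ET.E.obj (op T)).obj A :=
  (ET.E.map g.op).app A δ

lemma pull_comp {T' T Z A : C} (h : T' ⟶ T) (g : T ⟶ Z) (δ : (ET.E.obj (op Z)).obj A) :
    ET.pull (h ≫ g) δ = ET.pull h (ET.pull g δ) := by
  dsimp [pull]
  rw [ET.E.map_comp]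
  rfl

variable {ET}

lemma eq_zero_of_isZero_base {Z A : C} (hZ : IsZero Z) (δ : (ET.E.obj (op Z)).obj A) :
    δ = 0 := by
  obtain ⟨B, x, y, hconf⟩ := ET.real δ
  have h := (ET.ex_right hconf (𝟙 Z)).mp ⟨0, hZ.eq_of_src _ _⟩
  simpa using h

lemma pull_zero_mor [HasZeroObject C] {T Z A : C} (δ : (ET.E.obj (op Z)).obj A) :
    ET.pull (0 : T ⟶ Z) δ = 0 := by
  have h0 : (0 : T ⟶ Z) = (0 : T ⟶ (0 : C)) ≫ (0 : (0 : C) ⟶ Z) := by simp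
  rw [h0, ET.pull_comp]
  rw [eq_zero_of_isZero_base (isZero_zero C) (ET.pull (0 : (0 : C) ⟶ Z) δ)]
  exact map_zero _

lemma Conf.lift {A B Z T : C} {x : A ⟶ B} {y : B ⟶ Z} {δ} (h : ET.Conf x y δ)
    {g : T ⟶ Z} (hg : ET.pull g δ = 0) : ∃ h' : T ⟶ B, h' ≫ y = g :=
  (ET.ex_right h g).mpr hg

lemma Conf.pull_eq_zero {A B Z T : C} {x : A ⟶ B} {y : B ⟶ Z} {δ} (h : ET.Conf x y δ)
    {g : T ⟶ Z} (h' : T ⟶ B) (hh' : h' ≫ y = g) : ET.pull g δ = 0 :=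
  (ET.ex_right h g).mp ⟨h', hh'⟩

lemma Conf.self_pull {A B Z : C} {x : A ⟶ B} {y : B ⟶ Z} {δ} (h : ET.Conf x y δ) :
    ET.pull y δ = 0 :=
  h.pull_eq_zero (𝟙 B) (by simp)

variable (ET)

/-- The conflation realizing the zero extension on `(Z, A)`, with its splitting data. -/
lemma zero_pack (Z A : C) :
    ∃ (N : C) (ι : A ⟶ N) (π : N ⟶ Z) (σ : Z ⟶ N) (ζ : N ⟶ A),
      ET.Conf ι π (0 : (ET.E.obj (op Z)).obj A) ∧
      σ ≫ π = 𝟙 Z ∧ ι ≫ π = 0 ∧ ι ≫ ζ = 𝟙 A ∧ σ ≫ ζ = 0 ∧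
      ζ ≫ ι = 𝟙 N - π ≫ σ := by
  obtain ⟨N, ι, π, hconf⟩ := ET.real (0 : (ET.E.obj (op Z)).obj A)
  obtain ⟨σ, hσ⟩ := hconf.lift (g := 𝟙 Z) (map_zero _)
  obtain ⟨ρ, hρ⟩ := (ET.ex_left hconf (𝟙 A)).mpr (map_zero _)
  have hιπ : ι ≫ π = 0 := ET.conf_comp_zero hconf
  have hz : (𝟙 N - π ≫ σ) ≫ π = 0 := by
    simp [Preadditive.sub_comp, Category.assoc, hσ]
  obtain ⟨ζ, hζ⟩ := ET.ex_mid_right hconf _ hz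
  have hιζι : (ι ≫ ζ) ≫ ι = ι := by
    rw [Category.assoc, hζ, Preadditive.comp_sub, Category.comp_id, ← Category.assoc,
      hιπ, Limits.zero_comp, sub_zero]
  have hιζ : ι ≫ ζ = 𝟙 A := by
    calc ι ≫ ζ = (ι ≫ ζ) ≫ (ι ≫ ρ) := by rw [hρ, Category.comp_id]
    _ = ((ι ≫ ζ) ≫ ι) ≫ ρ := by simp only [Category.assoc]
    _ = ι ≫ ρ := by rw [hιζι]
    _ = 𝟙 A := hρ
  have hσζ : σ ≫ ζ = 0 := by
    have hσζι : (σ ≫ ζ) ≫ ι = 0 := by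
      rw [Category.assoc, hζ, Preadditive.comp_sub, Category.comp_id, ← Category.assoc,
        hσ, Category.id_comp, sub_self]
    calc σ ≫ ζ = (σ ≫ ζ) ≫ (ι ≫ ρ) := by rw [hρ, Category.comp_id]
    _ = ((σ ≫ ζ) ≫ ι) ≫ ρ := by simp only [Category.assoc]
    _ = 0 := by rw [hσζι, Limits.zero_comp]
  exact ⟨N, ι, π, σ, ζ, hconf, hσ, hιπ, hιζ, hσζ, hζ⟩

/-- Key construction for essential surjectivity. -/
lemma exists_good_defl [HasZeroObject C] (hep : ET.EnoughProj) {X Y : C} (f₀ : X ⟶ Y) :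
    ∃ (V : C) (ys : V ⟶ Y), ET.IsDeflation ys ∧
      (∃ h : X ⟶ V, h ≫ ys = f₀) ∧
      (∃ (u : V ⟶ X) (P : C) (_ : ET.IsProj P) (w : V ⟶ P) (p : P ⟶ Y),
        ys = u ≫ f₀ + w ≫ p) := by
  obtain ⟨A, P, a, p, δ, hP, hconfp⟩ := hep Y
  obtain ⟨N, ι, π, σ, ζ₁, hconf0, hσπ, hιπ, hιζ, hσζ, hζι⟩ := ET.zero_pack Y X
  set m : N ⟶ Y := ζ₁ ≫ f₀ - π with hm
  set ω := ET.pull m δ with hω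
  obtain ⟨V, α, v, hconfv⟩ := ET.real ω
  refine ⟨V, v ≫ π, ET.defl_comp v π ⟨A, α, ω, hconfv⟩ ⟨X, ι, 0, hconf0⟩, ?_, ?_⟩
  · set t : X ⟶ N := ι + f₀ ≫ σ with ht
    have htπ : t ≫ π = f₀ := by
      simp [ht, Preadditive.add_comp, hιπ, hσπ]
    have htζ : t ≫ ζ₁ = 𝟙 X := by
      simp [ht, Preadditive.add_comp, hιζ, hσζ]
    have htm : t ≫ m = 0 := by
      rw [hm, Preadditive.comp_sub, htπ, ← Category.assoc, htζ, Category.id_comp, sub_self]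
    have hpull : ET.pull t ω = 0 := by
      rw [hω, ← ET.pull_comp, htm, pull_zero_mor]
    obtain ⟨h₀, hh₀⟩ := hconfv.lift hpull
    exact ⟨h₀, by rw [← Category.assoc, hh₀, htπ]⟩
  · have h1 : ET.pull (v ≫ m) δ = 0 := by
      rw [ET.pull_comp, ← hω]
      exact hconfv.self_pull
    obtain ⟨L, hL⟩ := hconfp.lift h1
    refine ⟨v ≫ ζ₁, P, hP, -L, p, ?_⟩
    have h2 : L ≫ p = (v ≫ ζ₁) ≫ f₀ - v ≫ π := by
      rw [hL, hm, Preadditive.comp_sub, Category.assoc]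
    rw [Preadditive.neg_comp]
    rw [h2]
    abel

instance toStab_additive : (ET.toStab).Additive :=
  Quotient.functor_additive _ (projRel_add ET)

variable {ET}

lemma toStab_map_eq_of_projRel {X Y : C} {f g : X ⟶ Y} (h : projRel ET f g) :
    ET.toStab.map f = ET.toStab.map g :=
  CategoryTheory.Quotient.sound _ h

lemma projRel_of_toStab_map_eq {X Y : C} {f g : X ⟶ Y}
    (h : ET.toStab.map f = ET.toStab.map g) : projRel ET f g :=
  (Quotient.functor_map_eq_iff (projRel ET) f g).mp h

lemma toStab_map_proj_zero {T P Y : C} (hP : ET.IsProj P) (c₁ : T ⟶ P) (c₂ : P ⟶ Y) :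
    ET.toStab.map (c₁ ≫ c₂) = 0 := by
  have h : projRel ET (c₁ ≫ c₂) 0 := ⟨P, c₁, c₂, hP, by simp⟩
  rw [toStab_map_eq_of_projRel h, CategoryTheory.Functor.map_zero]

end ExtCat

section StabLemmas

open ExtCat

variable {ET : ExtCat C}

lemma yoneda_map_sub {X Y : Stab ET} (f g : X ⟶ Y) :
    preadditiveYoneda.map (f - g) = preadditiveYoneda.map f - preadditiveYoneda.map g := by
  ext T x
  show x ≫ (f - g) = x ≫ f - x ≫ g
  exact Preadditive.comp_sub _ _ _

/-- Morphisms out of a preadditive-Yoneda object are determined by their value at the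
identity. -/
lemma yoneda_hom_ext {T : Stab ET} {F : (Stab ET)ᵒᵖ ⥤ AddCommGrpCat.{v}}
    (κ₁ κ₂ : preadditiveYoneda.obj T ⟶ F)
    (h : κ₁.app (op T) (𝟙 T) = κ₂.app (op T) (𝟙 T)) : κ₁ = κ₂ := by
  ext X x
  have key : ∀ (κ : preadditiveYoneda.obj T ⟶ F),
      κ.app X x = F.map x.op (κ.app (op T) (𝟙 T)) := by
    intro κ
    have n := ConcreteCategory.congr_hom (κ.naturality (x.op : op T ⟶ X)) (𝟙 T)
    have hx : ((preadditiveYoneda.obj T).map (x.op : op T ⟶ X)) (𝟙 T) = x := by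
      show x ≫ 𝟙 T = x
      exact Category.comp_id x
    have n' : (κ.app X)
          (((preadditiveYoneda.obj T).map (x.op : op T ⟶ X)) (𝟙 T)) =
        (F.map (x.op : op T ⟶ X)) ((κ.app (op T)) (𝟙 T)) := n
    rw [hx] at n'
    exact n'
  rw [key κ₁, key κ₂, h]

/-- If a Yoneda morphism dies in the cokernel of `preadditiveYoneda.map q`, then it
factors through `q` in the stable category. -/
lemma stab_factor_of_coker_zero {W T T' : Stab ET} (q : W ⟶ T) (s : T' ⟶ T)
    (hs : preadditiveYoneda.map s ≫ cokernel.π (preadditiveYoneda.map q) = 0) :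
    ∃ w : T' ⟶ W, w ≫ q = s := by
  set S := ShortComplex.mk (preadditiveYoneda.map q) (cokernel.π (preadditiveYoneda.map q))
    (cokernel.condition _) with hSdef
  have hSe : S.Exact := S.exact_of_g_is_cokernel (cokernelIsCokernel _)
  haveI : (((evaluation (Stab ET)ᵒᵖ AddCommGrpCat.{v}).obj (op T'))).PreservesHomology := {}
  have hSe' := hSe.map ((evaluation (Stab ET)ᵒᵖ AddCommGrpCat.{v}).obj (op T'))
  rw [ShortComplex.ab_exact_iff] at hSe'
  have h0 : (cokernel.π (preadditiveYoneda.map q)).app (op T')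
      ((preadditiveYoneda.map s).app (op T') (𝟙 T')) = 0 := by
    have h0' := ConcreteCategory.congr_hom (NatTrans.congr_app hs (op T')) (𝟙 T')
    simp at h0'
    exact h0'
  have h1 : (preadditiveYoneda.map s).app (op T') (𝟙 T') = s := Category.id_comp s
  obtain ⟨x₁, hx₁⟩ := hSe' s (by rw [← h1]; exact h0)
  refine ⟨x₁, ?_⟩
  exact hx₁

lemma coker_pi_app_surj {W T : Stab ET} (q : W ⟶ T) (X : (Stab ET)ᵒᵖ) :
    Function.Surjective ((cokernel.π (preadditiveYoneda.map q)).app X) := by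
  have : Epi ((cokernel.π (preadditiveYoneda.map q)).app X) := inferInstance
  exact (AddCommGrpCat.epi_iff_surjective _).mp this

end StabLemmas

section DefectFunctor

open ExtCat

variable (ET : ExtCat C)

lemma isFP_sdefect {B Z : C} (y : B ⟶ Z) : IsFP (ET.sdefect y) :=
  ⟨ET.toStab.obj B, ET.toStab.obj Z, ET.toStab.map y, cokernel.π _, cokernel.condition _,
    coequalizer.π_epi, ShortComplex.exact_of_g_is_cokernel _ (cokernelIsCokernel _)⟩

/-- The defect map on morphisms of deflations. -/
noncomputable def defectMap {D D' : Defl ET} (f : D ⟶ D') :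
    ET.sdefect D.1.2.2 ⟶ ET.sdefect D'.1.2.2 :=
  cokernel.desc _ (preadditiveYoneda.map (ET.toStab.map f.1.2) ≫ cokernel.π _)
    (by
      erw [← Category.assoc, ← CategoryTheory.Functor.map_comp, ← CategoryTheory.Functor.map_comp, f.2,
        CategoryTheory.Functor.map_comp, CategoryTheory.Functor.map_comp, Category.assoc, cokernel.condition,
        Limits.comp_zero])

@[simp] lemma pi_defectMap {D D' : Defl ET} (f : D ⟶ D') :
    cokernel.π (preadditiveYoneda.map (ET.toStab.map D.1.2.2)) ≫ defectMap ET f =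
      preadditiveYoneda.map (ET.toStab.map f.1.2) ≫
        cokernel.π (preadditiveYoneda.map (ET.toStab.map D'.1.2.2)) :=
  cokernel.π_desc _ _ _

@[simp] lemma Defl_id_fst (D : Defl ET) : (𝟙 D : D ⟶ D).1.1 = 𝟙 D.1.1 := rfl
@[simp] lemma Defl_id_snd (D : Defl ET) : (𝟙 D : D ⟶ D).1.2 = 𝟙 D.1.2.1 := rfl
@[simp] lemma Defl_comp_fst {D D' D'' : Defl ET} (f : D ⟶ D') (g : D' ⟶ D'') :
    (f ≫ g).1.1 = f.1.1 ≫ g.1.1 := rfl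
@[simp] lemma Defl_comp_snd {D D' D'' : Defl ET} (f : D ⟶ D') (g : D' ⟶ D'') :
    (f ≫ g).1.2 = f.1.2 ≫ g.1.2 := rfl

/-- The defect functor `s-def C ⥤ mod C̲`. -/
noncomputable def defectFun :
    Defl ET ⥤ ObjectProperty.FullSubcategory (fun F : (Stab ET)ᵒᵖ ⥤ AddCommGrpCat.{v} => IsFP F) where
  obj D := ⟨ET.sdefect D.1.2.2, isFP_sdefect ET D.1.2.2⟩
  map {D D'} f := ObjectProperty.homMk (defectMap ET f)
  map_id D := by
    apply ObjectProperty.hom_ext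
    show defectMap ET (𝟙 D) = 𝟙 (ET.sdefect D.1.2.2)
    apply (cancel_epi (cokernel.π (preadditiveYoneda.map (ET.toStab.map D.1.2.2)))).mp
    erw [pi_defectMap, Defl_id_snd, CategoryTheory.Functor.map_id, Category.id_comp]
  map_comp {D D' D''} f g := by
    apply ObjectProperty.hom_ext
    show defectMap ET (f ≫ g) = defectMap ET f ≫ defectMap ET g
    apply (cancel_epi (cokernel.π (preadditiveYoneda.map (ET.toStab.map D.1.2.2)))).mp
    show _ = _ ≫ defectMap ET f ≫ defectMap ET g
    erw [pi_defectMap, Defl_comp_snd, CategoryTheory.Functor.map_comp, CategoryTheory.Functor.map_comp, Category.assoc,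
      ← Category.assoc (cokernel.π _) (defectMap ET f) (defectMap ET g),
      pi_defectMap, Category.assoc, pi_defectMap, ← Category.assoc]

lemma defectFun_map_pi {D D' : Defl ET} (f : D ⟶ D') :
    cokernel.π (preadditiveYoneda.map (ET.toStab.map D.1.2.2)) ≫ ((defectFun ET).map f).hom =
      preadditiveYoneda.map (ET.toStab.map f.1.2) ≫
        cokernel.π (preadditiveYoneda.map (ET.toStab.map D'.1.2.2)) :=
  pi_defectMap ET f

variable {ET}

/-- Any morphism of deflations whose codomain component factors through the codomain
deflation lies in the split-epi ideal. -/
lemma deflRel_of_factor {D D' : Defl ET} (f g : D ⟶ D')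
    (w : D.1.2.1 ⟶ D'.1.1) (hw : f.1.2 - g.1.2 = w ≫ D'.1.2.2) : deflRel ET f g := by
  obtain ⟨A', x', δ', hconf'⟩ := D'.2
  have hsq : D.1.2.2 ≫ (f.1.2 - g.1.2) = (f.1.1 - g.1.1) ≫ D'.1.2.2 := by
    erw [Preadditive.comp_sub, Preadditive.sub_comp, f.2, g.2]
  have hβ0 : ((f.1.1 - g.1.1) - D.1.2.2 ≫ w) ≫ D'.1.2.2 = 0 := by
    erw [Preadditive.sub_comp, ← hsq, hw, Category.assoc, sub_self]
  obtain ⟨τ, hτ⟩ := ET.ex_mid_right hconf' _ hβ0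
  obtain ⟨N, ι, d, σ, ζ₁, hconf0, hσd, hιd, hιζ, hσζ, hζι⟩ := ET.zero_pack D.1.2.1 A'
  obtain ⟨η, hη⟩ := (ET.ex_left hconf0 x').mpr (map_zero _)
  set u₁ : D.1.1 ⟶ N := τ ≫ ι + D.1.2.2 ≫ σ with hu₁
  set v₁ : N ⟶ D'.1.1 := d ≫ w + η - d ≫ σ ≫ η with hv₁
  have hcond_u : D.1.2.2 ≫ 𝟙 D.1.2.1 = u₁ ≫ d := by
    erw [Category.comp_id, hu₁, Preadditive.add_comp, Category.assoc, Category.assoc,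
      hιd, hσd, Limits.comp_zero, Category.comp_id, zero_add]
  have hηy' : η ≫ D'.1.2.2 = d ≫ σ ≫ η ≫ D'.1.2.2 := by
    have h3 : (𝟙 N - d ≫ σ) ≫ (η ≫ D'.1.2.2) = 0 := by
      erw [← hζι, Category.assoc, ← Category.assoc ι η D'.1.2.2, hη,
        ET.conf_comp_zero hconf', Limits.comp_zero]
    erw [Preadditive.sub_comp, Category.id_comp] at h3
    have h4 := sub_eq_zero.mp h3
    simpa only [Category.assoc] using h4
  have hcond_v : d ≫ (f.1.2 - g.1.2) = v₁ ≫ D'.1.2.2 := by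
    erw [hw, hv₁]
    simp only [Preadditive.sub_comp, Preadditive.add_comp, Category.assoc]
    erw [← hηy']
    abel
  refine ⟨⟨⟨N, D.1.2.1, d⟩, ⟨A', ι, 0, hconf0⟩⟩, ⟨(u₁, 𝟙 D.1.2.1), hcond_u⟩,
    ⟨(v₁, f.1.2 - g.1.2), hcond_v⟩, ⟨⟨⟨σ, hσd⟩⟩⟩, ?_, ?_⟩
  · show u₁ ≫ v₁ = f.1.1 - g.1.1
    have expand : u₁ ≫ v₁ =
        τ ≫ (ι ≫ d) ≫ w + τ ≫ (ι ≫ η) - τ ≫ (ι ≫ d) ≫ σ ≫ η +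
        (D.1.2.2 ≫ (σ ≫ d) ≫ w + D.1.2.2 ≫ σ ≫ η -
          D.1.2.2 ≫ (σ ≫ d) ≫ σ ≫ η) := by
      erw [hu₁, hv₁]
      simp only [Preadditive.add_comp, Preadditive.comp_add, Preadditive.comp_sub,
        Preadditive.sub_comp, Category.assoc]
      abel
    erw [expand, hιd, hσd, hη]
    simp only [Limits.zero_comp, Limits.comp_zero, Category.id_comp]
    erw [hτ]
    abel
  · show 𝟙 D.1.2.1 ≫ (f.1.2 - g.1.2) = f.1.2 - g.1.2
    erw [Category.id_comp]

variable (ET)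

lemma defectFun_well_defined (D D' : Defl ET) (f g : D ⟶ D') (h : deflRel ET f g) :
    (defectFun ET).map f = (defectFun ET).map g := by
  obtain ⟨D₀, u, vv, hsplit, h1, h2⟩ := h
  have hzero : IsZero (ET.sdefect D₀.1.2.2) := by
    haveI : IsSplitEpi (ET.toStab.map D₀.1.2.2) :=
      ⟨⟨⟨ET.toStab.map hsplit.exists_splitEpi.some.section_, by
        erw [← CategoryTheory.Functor.map_comp, hsplit.exists_splitEpi.some.id,
          CategoryTheory.Functor.map_id]⟩⟩⟩
    haveI : IsSplitEpi (preadditiveYoneda.map (ET.toStab.map D₀.1.2.2)) :=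
      ⟨⟨⟨preadditiveYoneda.map (ET.toStab.map hsplit.exists_splitEpi.some.section_), by
        erw [← CategoryTheory.Functor.map_comp, ← CategoryTheory.Functor.map_comp,
          hsplit.exists_splitEpi.some.id, CategoryTheory.Functor.map_id]⟩⟩⟩
    erw [IsZero.iff_id_eq_zero]
    have hπ0 : cokernel.π (preadditiveYoneda.map (ET.toStab.map D₀.1.2.2)) = 0 :=
      cokernel.π_of_epi _
    apply (cancel_epi (cokernel.π (preadditiveYoneda.map (ET.toStab.map D₀.1.2.2)))).mp
    erw [hπ0]
    exact (Limits.zero_comp).trans Limits.zero_comp.symm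
  have hmid : defectMap ET u ≫ defectMap ET vv = 0 := by
    have hu0 : defectMap ET u = 0 := hzero.eq_of_tgt _ _
    erw [hu0, Limits.zero_comp]
  have h2' : u.1.2 ≫ vv.1.2 = f.1.2 - g.1.2 := h2
  have key : defectMap ET f - defectMap ET g = defectMap ET u ≫ defectMap ET vv := by
    apply (cancel_epi (cokernel.π (preadditiveYoneda.map (ET.toStab.map D.1.2.2)))).mp
    have lhs : cokernel.π (preadditiveYoneda.map (ET.toStab.map D.1.2.2)) ≫
        (defectMap ET f - defectMap ET g) =
        preadditiveYoneda.map (ET.toStab.map (f.1.2 - g.1.2)) ≫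
          cokernel.π (preadditiveYoneda.map (ET.toStab.map D'.1.2.2)) := by
      erw [Preadditive.comp_sub, pi_defectMap, pi_defectMap, ← Preadditive.sub_comp,
        ← yoneda_map_sub, ← CategoryTheory.Functor.map_sub]
    have rhs : cokernel.π (preadditiveYoneda.map (ET.toStab.map D.1.2.2)) ≫
        (defectMap ET u ≫ defectMap ET vv) =
        preadditiveYoneda.map (ET.toStab.map (u.1.2 ≫ vv.1.2)) ≫
          cokernel.π (preadditiveYoneda.map (ET.toStab.map D'.1.2.2)) := by
      erw [← Category.assoc, pi_defectMap, Category.assoc, pi_defectMap, ← Category.assoc,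
        ← CategoryTheory.Functor.map_comp, ← CategoryTheory.Functor.map_comp]
      rfl
    erw [lhs, rhs, h2']
  have hfinal : defectMap ET f - defectMap ET g = 0 := key.trans hmid
  exact ObjectProperty.hom_ext _ (sub_eq_zero.mp hfinal)

lemma defectFun_reflects (D D' : Defl ET) (f g : D ⟶ D')
    (h : (defectFun ET).map f = (defectFun ET).map g) : deflRel ET f g := by
  obtain ⟨A', x', δ', hconf'⟩ := D'.2
  have hdm : defectMap ET f = defectMap ET g := congrArg (fun t => t.hom) h
  have h1 : preadditiveYoneda.map (ET.toStab.map (f.1.2 - g.1.2)) ≫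
      cokernel.π (preadditiveYoneda.map (ET.toStab.map D'.1.2.2)) = 0 := by
    erw [CategoryTheory.Functor.map_sub, yoneda_map_sub, Preadditive.sub_comp,
      ← pi_defectMap ET f, ← pi_defectMap ET g, hdm, sub_self]
  obtain ⟨wbar, hwbar⟩ := stab_factor_of_coker_zero (ET.toStab.map D'.1.2.2)
    (ET.toStab.map (f.1.2 - g.1.2)) h1
  obtain ⟨w₀, hw₀⟩ := (Quotient.functor (projRel ET)).map_surjective wbar
  have h2 : ET.toStab.map (w₀ ≫ D'.1.2.2) = ET.toStab.map (f.1.2 - g.1.2) := by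
    erw [CategoryTheory.Functor.map_comp]
    show (Quotient.functor (projRel ET)).map w₀ ≫ _ = _
    erw [hw₀, hwbar]
  obtain ⟨Q, c₁, c₂, hQ, hfac⟩ := projRel_of_toStab_map_eq h2
  obtain ⟨l, hl⟩ := hQ x' D'.1.2.2 δ' hconf' c₂
  apply deflRel_of_factor f g (w₀ - c₁ ≫ l)
  erw [Preadditive.sub_comp, Category.assoc, hl, hfac]
  abel

lemma defectFun_full (D D' : Defl ET) (φ : (defectFun ET).obj D ⟶ (defectFun ET).obj D') :
    ∃ f : D ⟶ D', (defectFun ET).map f = φ := by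
  obtain ⟨A', x', δ', hconf'⟩ := D'.2
  set πD := cokernel.π (preadditiveYoneda.map (ET.toStab.map D.1.2.2)) with hπD
  set πD' := cokernel.π (preadditiveYoneda.map (ET.toStab.map D'.1.2.2)) with hπD'
  set ψ : preadditiveYoneda.obj (ET.toStab.obj D.1.2.1) ⟶ ET.sdefect D'.1.2.2 :=
    πD ≫ φ.hom with hψdef
  obtain ⟨ζbar, hζbar⟩ := coker_pi_app_surj (ET.toStab.map D'.1.2.2)
    (op (ET.toStab.obj D.1.2.1)) (ψ.app _ (𝟙 _))
  have hψ : preadditiveYoneda.map ζbar ≫ πD' = ψ := by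
    apply yoneda_hom_ext
    have hid : ((preadditiveYoneda.map ζbar).app (op (ET.toStab.obj D.1.2.1)))
        (𝟙 (ET.toStab.obj D.1.2.1)) = ζbar := Category.id_comp ζbar
    show (πD'.app (op (ET.toStab.obj D.1.2.1)))
        (((preadditiveYoneda.map ζbar).app (op (ET.toStab.obj D.1.2.1)))
          (𝟙 (ET.toStab.obj D.1.2.1))) = _
    erw [hid]
    exact hζbar
  have hcomp : preadditiveYoneda.map (ET.toStab.map D.1.2.2 ≫ ζbar) ≫ πD' = 0 := by
    erw [CategoryTheory.Functor.map_comp, Category.assoc, hψ, hψdef, ← Category.assoc,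
      cokernel.condition, Limits.zero_comp]
  obtain ⟨bbar, hbbar⟩ := stab_factor_of_coker_zero (ET.toStab.map D'.1.2.2) _ hcomp
  obtain ⟨ζ₀, hζ₀⟩ := (Quotient.functor (projRel ET)).map_surjective ζbar
  obtain ⟨b₀, hb₀⟩ := (Quotient.functor (projRel ET)).map_surjective bbar
  have h2 : ET.toStab.map (b₀ ≫ D'.1.2.2) = ET.toStab.map (D.1.2.2 ≫ ζ₀) := by
    erw [CategoryTheory.Functor.map_comp, CategoryTheory.Functor.map_comp]
    show (Quotient.functor (projRel ET)).map b₀ ≫ _ =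
      _ ≫ (Quotient.functor (projRel ET)).map ζ₀
    erw [hb₀, hζ₀, hbbar]
    rfl
  obtain ⟨Q, c₁, c₂, hQ, hfac⟩ := projRel_of_toStab_map_eq h2
  obtain ⟨l, hl⟩ := hQ x' D'.1.2.2 δ' hconf' c₂
  have hmor : D.1.2.2 ≫ ζ₀ = (b₀ - c₁ ≫ l) ≫ D'.1.2.2 := by
    erw [Preadditive.sub_comp, Category.assoc, hl, hfac]
    abel
  refine ⟨⟨(b₀ - c₁ ≫ l, ζ₀), hmor⟩, ?_⟩
  apply ObjectProperty.hom_ext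
  show defectMap ET _ = φ.hom
  apply (cancel_epi (cokernel.π (preadditiveYoneda.map (ET.toStab.map D.1.2.2)))).mp
  erw [pi_defectMap]
  show preadditiveYoneda.map ((Quotient.functor (projRel ET)).map ζ₀) ≫ πD' = πD ≫ φ.hom
  erw [hζ₀, hψ, hψdef]
  rfl

end DefectFunctor

end Development

/-- For an extriangulated category `C` with enough projectives there
is an equivalence `s-def C/[s-epi C] ≌ mod C̲` sending (the class of) a deflation
`y : B ⟶ Z` to its defect `Coker(C̲(-,B) ⟶ C̲(-,Z))`. -/
theorem deflations_mod_split_epis_equiv_mod_stab (ET : ExtCat C) (hep : ET.EnoughProj) :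
    ∃ e : CategoryTheory.Quotient (deflRel ET) ≌
          ObjectProperty.FullSubcategory (fun F : (Stab ET)ᵒᵖ ⥤ AddCommGrpCat.{v} => IsFP F),
      ∀ D : Defl ET,
        Nonempty ((e.functor.obj ((Quotient.functor (deflRel ET)).obj D)).obj ≅
          sdefect ET D.1.2.2) := by
  classical
  let Gq := CategoryTheory.Quotient.lift (deflRel ET) (defectFun ET) (defectFun_well_defined ET)
  haveI hfull : Gq.Full := by
    constructor
    intro Q1 Q2 φ
    obtain ⟨f, hf⟩ := defectFun_full ET Q1.as Q2.as φ
    exact ⟨(Quotient.functor (deflRel ET)).map f, by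
      erw [CategoryTheory.Quotient.lift_map_functor_map]; exact hf⟩
  haveI hfaith : Gq.Faithful := by
    constructor
    intro Q1 Q2 μ ν h
    obtain ⟨f, rfl⟩ := (Quotient.functor (deflRel ET)).map_surjective μ
    obtain ⟨g, rfl⟩ := (Quotient.functor (deflRel ET)).map_surjective ν
    erw [CategoryTheory.Quotient.lift_map_functor_map, CategoryTheory.Quotient.lift_map_functor_map] at h
    exact CategoryTheory.Quotient.sound _ (defectFun_reflects ET _ _ f g h)
  haveI hess : Gq.EssSurj := by
    constructor
    intro F'
    obtain ⟨Xs, Ys, fs, ps, ws, hepi, hexact⟩ := F'.property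
    obtain ⟨f₀, hf₀⟩ := (Quotient.functor (projRel ET)).map_surjective fs
    obtain ⟨V, ys, hdefl, ⟨h, hh⟩, ⟨u, P, hP, w, p, hdecomp⟩⟩ :=
      ET.exists_good_defl hep f₀
    refine ⟨(Quotient.functor (deflRel ET)).obj ⟨⟨V, Ys.as, ys⟩, hdefl⟩, ⟨?_⟩⟩
    -- iso between `sdefect ys` and `F'.obj`
    have hfs : preadditiveYoneda.map fs =
        preadditiveYoneda.map (ET.toStab.map h) ≫ preadditiveYoneda.map (ET.toStab.map ys) := by
      erw [← CategoryTheory.Functor.map_comp, ← CategoryTheory.Functor.map_comp, hh, ← hf₀]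
      rfl
    have hys : preadditiveYoneda.map (ET.toStab.map ys) =
        preadditiveYoneda.map (ET.toStab.map u) ≫ preadditiveYoneda.map fs := by
      erw [← CategoryTheory.Functor.map_comp]
      congr 1
      erw [hdecomp, CategoryTheory.Functor.map_add, toStab_map_proj_zero hP w p, add_zero,
        CategoryTheory.Functor.map_comp]
      exact congrArg (fun t => ET.toStab.map u ≫ t) hf₀
    have cond1 : preadditiveYoneda.map fs ≫
        cokernel.π (preadditiveYoneda.map (ET.toStab.map ys)) = 0 := by
      erw [hfs, Category.assoc, cokernel.condition, Limits.comp_zero]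
    have cond2 : preadditiveYoneda.map (ET.toStab.map ys) ≫
        cokernel.π (preadditiveYoneda.map fs) = 0 := by
      erw [hys, Category.assoc, cokernel.condition, Limits.comp_zero]
    have i₂ : ET.sdefect ys ≅ cokernel (preadditiveYoneda.map fs) := by
      refine ⟨cokernel.desc _ (cokernel.π _) cond2, cokernel.desc _ (cokernel.π _) cond1,
        ?_, ?_⟩
      · apply (cancel_epi (cokernel.π (preadditiveYoneda.map (ET.toStab.map ys)))).mp
        erw [← Category.assoc, cokernel.π_desc, cokernel.π_desc]
        exact (Category.comp_id _).symm
      · apply (cancel_epi (cokernel.π (preadditiveYoneda.map fs))).mp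
        erw [← Category.assoc, cokernel.π_desc, cokernel.π_desc]
        exact (Category.comp_id _).symm
    haveI : Epi (ShortComplex.mk (preadditiveYoneda.map fs) ps ws).g := hepi
    have i₁ : cokernel (preadditiveYoneda.map fs) ≅ F'.obj :=
      IsColimit.coconePointUniqueUpToIso (cokernelIsCokernel (preadditiveYoneda.map fs))
        hexact.gIsCokernel
    exact (ObjectProperty.ι _).preimageIso (i₂ ≪≫ i₁)
  haveI : Gq.IsEquivalence := {}
  exact ⟨Gq.asEquivalence, fun D => ⟨Iso.refl _⟩⟩

end Paper
end
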